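/- Define, for $a,b\in\frac12+\mathbb{Z}$ and $s\in\{0,1\}$, the Laurent series $\psi^s_{a,b}(z)=\frac{z^{5+s}(z^{3a+b}-z^{a+3b}-z^{-a-3b}+z^{-3a-b})-z^{6+s}(z^{3a-b}-z^{-a+3b}-z^{a-3b}+z^{-3a+b})}{(1-z^2)^2(1-z^4)(1-z^6)}$. Then $\psi^s_{a,b}$ satisfies: (i) $\psi^s_{a,b}(z)(z^3+z+z^{-1}+z^{-3})=\psi^s_{a+1,b}+\psi^s_{a-1,b}+\psi^s_{a,b+1}+\psi^s_{a,b-1}$; (ii) $\psi^s_{a,b}(z)(z^4+z^2+1+z^{-2}+z^{-4})=\psi^s_{a+1,b+1}+\psi^s_{a+1,b-1}+\psi^s_{a-1,b+1}+\psi^s_{a-1,b-1}+\psi^s_{a,b}$; (iii) $\psi^s_{a,b}=-\psi^s_{b,a}=-\psi^s_{-b,-a}=\psi^s_{-a,-b}$; (iv) $\psi^s_{3/2,1/2}=\frac{z^s}{1-z^6}$ and $\psi^s_{3/2,-1/2}=\frac{z^{3+s}}{1-z^6}$. Moreover, $\psi^s_{a,b}$ is the unique family of Laurent series satisfying (i)–(iv).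 -/

import Mathlib

noncomputable section

/-- the variable `z` of the Laurent series field `ℂ((z))`. -/
def zL : LaurentSeries ℂ := HahnSeries.single 1 1

/-- The family `ψ^s_{a,b}` of Laurent series, for half-integers `a = m + 1/2`,
`b = n + 1/2` (`m n : ℤ`):`ψ^s_{a,b}(z) =
 (z^{5+s}(z^{3a+b} - z^{a+3b} - z^{-a-3b} + z^{-3a-b})
   - z^{6+s}(z^{3a-b} - z^{-a+3b} - z^{a-3b} + z^{-3a+b}))
 / ((1-z²)²(1-z⁴)(1-z⁶))`.
Note `3a+b = 3m+n+2`, `a+3b = m+3n+2`, `3a-b = 3m-n+1`, `a-3b = m-3n-1`. -/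
def psiF (s : ℕ) (m n : ℤ) : LaurentSeries ℂ :=
  (zL ^ ((5 : ℤ) + s) *
      (zL ^ (3 * m + n + 2) - zL ^ (m + 3 * n + 2)
        - zL ^ (-m - 3 * n - 2) + zL ^ (-3 * m - n - 2))
    - zL ^ ((6 : ℤ) + s) *
      (zL ^ (3 * m - n + 1) - zL ^ (-m + 3 * n + 1)
        - zL ^ (m - 3 * n - 1) + zL ^ (-3 * m + n - 1)))
  / ((1 - zL ^ (2 : ℤ)) ^ 2 * (1 - zL ^ (4 : ℤ)) * (1 - zL ^ (6 : ℤ)))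

/-- Conditions (i)–(iv) on a family `Ψ_{a,b}`, `a = m + 1/2`, `b = n + 1/2`:
(i) multiplication by `z³+z+z⁻¹+z⁻³` gives the four neighbours `a±1, b±1`;
(ii) multiplication by `z⁴+z²+1+z⁻²+z⁻⁴` gives the four diagonal neighbours
together with `Ψ_{a,b}`;
(iii) `Ψ_{a,b} = -Ψ_{b,a} = -Ψ_{-b,-a} = Ψ_{-a,-b}` (on indices:
`(b,a) ↔ (n,m)`, `(-b,-a) ↔ (-n-1,-m-1)`, `(-a,-b) ↔ (-m-1,-n-1)`);
(iv) `Ψ_{3/2,1/2} = z^s/(1-z⁶)`, `Ψ_{3/2,-1/2} = z^{3+s}/(1-z⁶)`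
(on indices: `(1,0)` and `(1,-1)`). -/
def psiProps (s : ℕ) (Ψ : ℤ → ℤ → LaurentSeries ℂ) : Prop :=
  (∀ m n : ℤ, Ψ m n * (zL ^ (3 : ℤ) + zL + zL ^ (-1 : ℤ) + zL ^ (-3 : ℤ)) =
      Ψ (m + 1) n + Ψ (m - 1) n + Ψ m (n + 1) + Ψ m (n - 1)) ∧
  (∀ m n : ℤ, Ψ m n *
        (zL ^ (4 : ℤ) + zL ^ (2 : ℤ) + 1 + zL ^ (-2 : ℤ) + zL ^ (-4 : ℤ)) =
      Ψ (m + 1) (n + 1) + Ψ (m + 1) (n - 1) + Ψ (m - 1) (n + 1)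
        + Ψ (m - 1) (n - 1) + Ψ m n) ∧
  (∀ m n : ℤ, Ψ m n = -Ψ n m ∧ Ψ m n = -Ψ (-n - 1) (-m - 1) ∧
      Ψ m n = Ψ (-m - 1) (-n - 1)) ∧
  (Ψ 1 0 = zL ^ (s : ℤ) / (1 - zL ^ (6 : ℤ)) ∧
      Ψ 1 (-1) = zL ^ ((3 : ℤ) + s) / (1 - zL ^ (6 : ℤ)))

/- ### Auxiliary lemmas -/

lemma zL_ne_zero : zL ≠ 0 := HahnSeries.single_ne_zero one_ne_zero

lemma zL_fuse2 (a b : ℤ) : zL ^ a * zL ^ b = zL ^ (a + b) :=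
  (zpow_add₀ zL_ne_zero a b).symm

lemma zL_fuse1 (a b : ℤ) (c : LaurentSeries ℂ) :
    zL ^ a * (zL ^ b * c) = zL ^ (a + b) * c := by
  rw [← mul_assoc, zL_fuse2]

lemma zL_fuse4 (a : ℤ) : zL ^ a * zL = zL ^ (a + 1) :=
  (zpow_add_one₀ zL_ne_zero a).symm

lemma zL_fuse3 (a : ℤ) (c : LaurentSeries ℂ) :
    zL ^ a * (zL * c) = zL ^ (a + 1) * c := by
  rw [← mul_assoc, zL_fuse4]

lemma zL_fuse6 (a : ℤ) : zL * zL ^ a = zL ^ (1 + a) := by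
  rw [mul_comm, zL_fuse4, add_comm]

lemma zL_fuse5 (a : ℤ) (c : LaurentSeries ℂ) :
    zL * (zL ^ a * c) = zL ^ (1 + a) * c := by
  rw [← mul_assoc, zL_fuse6]

lemma one_sub_zL_pow_ne_zero (k : ℕ) (hk : 0 < k) :
    (1 - zL ^ (k : ℤ)) ≠ 0 := by
  intro h
  rw [sub_eq_zero] at h
  have h1 : zL ^ (k : ℤ) = HahnSeries.single (k : ℤ) 1 := by
    rw [zpow_natCast, zL, HahnSeries.single_pow]; norm_num
  rw [h1] at h
  have h2 := congrArg (fun f => HahnSeries.coeff f (k : ℤ)) h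
  simp [HahnSeries.coeff_single, HahnSeries.coeff_one, hk.ne'] at h2

lemma h6_ne : (1 - zL ^ (6 : ℤ)) ≠ 0 := by
  exact_mod_cast one_sub_zL_pow_ne_zero 6 (by norm_num)

lemma hD_ne : ((1 - zL ^ (2 : ℤ)) ^ 2 * (1 - zL ^ (4 : ℤ)) * (1 - zL ^ (6 : ℤ))) ≠ 0 := by
  have h2 : (1 - zL ^ (2 : ℤ)) ≠ 0 := by
    exact_mod_cast one_sub_zL_pow_ne_zero 2 (by norm_num)
  have h4 : (1 - zL ^ (4 : ℤ)) ≠ 0 := by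
    exact_mod_cast one_sub_zL_pow_ne_zero 4 (by norm_num)
  exact mul_ne_zero (mul_ne_zero (pow_ne_zero 2 h2) h4) h6_ne

lemma two_ne_zero_LS : (2 : LaurentSeries ℂ) ≠ 0 := by
  intro h
  rw [show (2 : LaurentSeries ℂ) = 1 + 1 by norm_num] at h
  have h2 := congrArg (fun f => HahnSeries.coeff f (0 : ℤ)) h
  simp [HahnSeries.coeff_add, HahnSeries.coeff_one] at h2

/-- Uniqueness core: a family satisfying the homogeneous versions of (i)–(iii)
and vanishing at the two base points vanishes identically. -/
lemma key_zero (Δ : ℤ → ℤ → LaurentSeries ℂ)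
    (h1 : ∀ m n : ℤ, Δ m n * (zL ^ (3 : ℤ) + zL + zL ^ (-1 : ℤ) + zL ^ (-3 : ℤ)) =
      Δ (m + 1) n + Δ (m - 1) n + Δ m (n + 1) + Δ m (n - 1))
    (h2 : ∀ m n : ℤ, Δ m n *
        (zL ^ (4 : ℤ) + zL ^ (2 : ℤ) + 1 + zL ^ (-2 : ℤ) + zL ^ (-4 : ℤ)) =
      Δ (m + 1) (n + 1) + Δ (m + 1) (n - 1) + Δ (m - 1) (n + 1)
        + Δ (m - 1) (n - 1) + Δ m n)
    (h3 : ∀ m n : ℤ, Δ m n = -Δ n m ∧ Δ m n = -Δ (-n - 1) (-m - 1) ∧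
      Δ m n = Δ (-m - 1) (-n - 1))
    (h40 : Δ 1 0 = 0) (h41 : Δ 1 (-1) = 0) :
    ∀ m n : ℤ, Δ m n = 0 := by
  have half : ∀ x : LaurentSeries ℂ, x = -x → x = 0 := by
    intro x hx
    have hx2 : x * 2 = 0 := by linear_combination hx
    rcases mul_eq_zero.mp hx2 with h | h
    · exact h
    · exact absurd h two_ne_zero_LS
  have diag1 : ∀ m : ℤ, Δ m m = 0 := fun m => half _ ((h3 m m).1)
  have diag2 : ∀ m : ℤ, Δ m (-m - 1) = 0 := by
    intro m
    have h := (h3 m (-m - 1)).2.1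
    rw [show -(-m - 1) - 1 = m by ring] at h
    exact half _ h
  have row : ∀ k : ℕ,
      (∀ p q : ℤ, p = k → -p - 1 ≤ q → q ≤ p → Δ p q = 0) ∧
      (∀ p q : ℤ, p = (k : ℤ) + 1 → -p - 1 ≤ q → q ≤ p → Δ p q = 0) := by
    intro k
    induction k with
    | zero =>
      constructor
      · intro p q hp hq1 hq2
        have hp' : p = 0 := by exact_mod_cast hp
        subst hp'
        interval_cases q
        · have := diag2 0; rw [show -(0 : ℤ) - 1 = -1 by ring] at this; exact this
        · exact diag1 0
      · intro p q hp hq1 hq2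
        have hp' : p = 1 := by push_cast at hp; omega
        subst hp'
        interval_cases q
        · have := diag2 1; rw [show -(1 : ℤ) - 1 = -2 by ring] at this; exact this
        · exact h41
        · exact h40
        · exact diag1 1
    | succ k ih =>
      obtain ⟨ihk, ihk1⟩ := ih
      refine ⟨ihk1, ?_⟩
      set M : ℤ := (k : ℤ) + 1 with hM
      have hM1 : 1 ≤ M := by omega
      have rowM : ∀ q : ℤ, -M - 1 ≤ q → q ≤ M → Δ M q = 0 := fun q a b =>
        ihk1 M q rfl a b
      have rowM' : ∀ q : ℤ, -M ≤ q → q ≤ M - 1 → Δ (M - 1) q = 0 := fun q a b =>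
        ihk (M - 1) q (by omega) (by omega) b
      have step1 : ∀ q : ℤ, -M ≤ q → q ≤ M - 1 → Δ (M + 1) q = 0 := by
        intro q hq1 hq2
        have e := h1 M q
        rw [rowM q (by omega) (by omega), rowM' q hq1 hq2,
          rowM (q + 1) (by omega) (by omega), rowM (q - 1) (by omega) (by omega),
          zero_mul] at e
        simpa using e.symm
      have step2 : Δ (M + 1) M = 0 := by
        have e := h2 M (M - 1)
        rw [show M - 1 + 1 = M by ring, show M - 1 - 1 = M - 2 by ring] at e
        have c3 : Δ (M - 1) M = 0 := by
          have h' := (h3 (M - 1) M).1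
          rw [rowM (M - 1) (by omega) (by omega)] at h'
          simpa using h'
        rw [rowM (M - 1) (by omega) (by omega), zero_mul,
          step1 (M - 2) (by omega) (by omega),
          rowM' (M - 2) (by omega) (by omega), c3] at e
        simpa using e.symm
      have step3 : Δ (M + 1) (-M - 1) = 0 := by
        have e := h2 M (-M)
        rw [show -M + 1 = -(M - 1) by ring] at e
        have c4 : Δ (M - 1) (-M - 1) = 0 := by
          have h' := (h3 (M - 1) (-M - 1)).2.1
          rw [show -(-M - 1) - 1 = M by ring, show -(M - 1) - 1 = -M by ring] at h'
          rw [rowM (-M) (by omega) (by omega)] at h'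
          simpa using h'
        rw [rowM (-M) (by omega) (by omega), zero_mul,
          step1 (-(M - 1)) (by omega) (by omega),
          rowM' (-(M - 1)) (by omega) (by omega), c4] at e
        simpa using e.symm
      intro p q hp hq1 hq2
      have hp' : p = M + 1 := by push_cast at hp; omega
      subst hp'
      rcases (by omega : q = M + 1 ∨ q = -M - 2 ∨ q = M ∨ q = -M - 1 ∨
          (-M ≤ q ∧ q ≤ M - 1)) with rfl | rfl | rfl | rfl | ⟨a, b⟩
      · exact diag1 (M + 1)
      · have := diag2 (M + 1)
        rw [show -(M + 1) - 1 = -M - 2 by ring] at this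
        exact this
      · exact step2
      · exact step3
      · exact step1 q a b
  have rowAll : ∀ p q : ℤ, 0 ≤ p → -p - 1 ≤ q → q ≤ p → Δ p q = 0 := by
    intro p q hp a b
    lift p to ℕ using hp with k
    exact (row k).1 (k : ℤ) q rfl a b
  intro m n
  rcases (by omega :
      (0 ≤ m ∧ -m - 1 ≤ n ∧ n ≤ m) ∨
      (0 ≤ n ∧ -n - 1 ≤ m ∧ m ≤ n) ∨
      (0 ≤ -m - 1 ∧ -(-m - 1) - 1 ≤ -n - 1 ∧ -n - 1 ≤ -m - 1) ∨
      (0 ≤ -n - 1 ∧ -(-n - 1) - 1 ≤ -m - 1 ∧ -m - 1 ≤ -n - 1)) with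
    ⟨a, b, c⟩ | ⟨a, b, c⟩ | ⟨a, b, c⟩ | ⟨a, b, c⟩
  · exact rowAll m n a b c
  · rw [(h3 m n).1, rowAll n m a b c, neg_zero]
  · rw [(h3 m n).2.2, rowAll _ _ a b c]
  · rw [(h3 m n).2.1, rowAll _ _ a b c, neg_zero]

/- ### psiF satisfies the properties -/

set_option maxHeartbeats 2000000 in
lemma psiF_prop1 (s : ℕ) (m n : ℤ) :
    psiF s m n * (zL ^ (3 : ℤ) + zL + zL ^ (-1 : ℤ) + zL ^ (-3 : ℤ)) =
      psiF s (m + 1) n + psiF s (m - 1) n + psiF s m (n + 1) + psiF s m (n - 1) := by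
  unfold psiF
  rw [← add_div, ← add_div, ← add_div, div_mul_eq_mul_div]
  congr 1
  simp only [mul_add, add_mul, mul_sub, sub_mul, neg_mul, mul_neg, mul_assoc,
    zL_fuse1, zL_fuse2, zL_fuse3, zL_fuse4, zL_fuse5, zL_fuse6]
  ring_nf

set_option maxHeartbeats 2000000 in
lemma psiF_prop2 (s : ℕ) (m n : ℤ) :
    psiF s m n * (zL ^ (4 : ℤ) + zL ^ (2 : ℤ) + 1 + zL ^ (-2 : ℤ) + zL ^ (-4 : ℤ)) =
      psiF s (m + 1) (n + 1) + psiF s (m + 1) (n - 1) + psiF s (m - 1) (n + 1)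
        + psiF s (m - 1) (n - 1) + psiF s m n := by
  unfold psiF
  rw [← add_div, ← add_div, ← add_div, ← add_div,
    div_mul_eq_mul_div]
  congr 1
  simp only [mul_add, add_mul, mul_sub, sub_mul, neg_mul, mul_neg, mul_one, one_mul,
    mul_assoc, zL_fuse1, zL_fuse2, zL_fuse3, zL_fuse4, zL_fuse5, zL_fuse6]
  ring_nf

set_option maxHeartbeats 1000000 in
lemma psiF_prop3 (s : ℕ) (m n : ℤ) :
    psiF s m n = -psiF s n m ∧ psiF s m n = -psiF s (-n - 1) (-m - 1) ∧
      psiF s m n = psiF s (-m - 1) (-n - 1) := by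
  refine ⟨?_, ?_, ?_⟩ <;>
  · unfold psiF
    ring_nf

set_option maxHeartbeats 1000000 in
lemma psiF_prop4 (s : ℕ) :
    psiF s 1 0 = zL ^ (s : ℤ) / (1 - zL ^ (6 : ℤ)) ∧
      psiF s 1 (-1) = zL ^ ((3 : ℤ) + s) / (1 - zL ^ (6 : ℤ)) := by
  constructor <;>
  · unfold psiF
    rw [div_eq_div_iff hD_ne h6_ne]
    simp only [pow_two, mul_add, add_mul, mul_sub, sub_mul, neg_mul, mul_neg,
      mul_one, one_mul, mul_assoc,
      zL_fuse1, zL_fuse2, zL_fuse3, zL_fuse4, zL_fuse5, zL_fuse6]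
    ring_nf

/-- the explicit family `ψ^s_{a,b}` satisfies (i)–(iv), and is the
unique family of Laurent series doing so. -/
theorem stmt_18 (s : ℕ) (hs : s ≤ 1) :
    psiProps s (psiF s) ∧ ∀ Ψ : ℤ → ℤ → LaurentSeries ℂ, psiProps s Ψ → Ψ = psiF s := by
  have hmain : psiProps s (psiF s) :=
    ⟨psiF_prop1 s, psiF_prop2 s, psiF_prop3 s, psiF_prop4 s⟩
  refine ⟨hmain, ?_⟩
  intro Ψ hΨ
  obtain ⟨p1, p2, p3, p4⟩ := hΨ
  obtain ⟨q1, q2, q3, q4⟩ := hmain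
  have hzero : ∀ m n : ℤ, Ψ m n - psiF s m n = 0 := by
    refine key_zero (fun a b => Ψ a b - psiF s a b) ?_ ?_ ?_ ?_ ?_
    · intro a b
      linear_combination p1 a b - q1 a b
    · intro a b
      linear_combination p2 a b - q2 a b
    · intro a b
      refine ⟨?_, ?_, ?_⟩
      · linear_combination (p3 a b).1 - (q3 a b).1
      · linear_combination (p3 a b).2.1 - (q3 a b).2.1
      · linear_combination (p3 a b).2.2 - (q3 a b).2.2
    · linear_combination p4.1 - q4.1
    · linear_combination p4.2 - q4.2
  funext m n
  exact sub_eq_zero.mp (hzero m n)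

end
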